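/- Let A be a nonzero n×n nonnegative matrix and A^(0), A^(1), ... the Sinkhorn–Knopp iterates with uniform targets (rows normalized at even steps, columns at odd steps), all normalizations well defined. Then for any odd k: min_i r_i(A^(k)) ≤ min_i r_i(A^(k+2)) ≤ 1 ≤ max_i r_i(A^(k+2)) ≤ max_i r_i(A^(k)); for any even k: min_j c_j(A^(k)) ≤ min_j c_j(A^(k+2)) ≤ 1 ≤ max_j c_j(A^(k+2)) ≤ max_j c_j(A^(k)); and for any odd k: (max_j c_j(A^(k-1)))^{-1} ≤ min_i r_i(A^(k)) ≤ 1 ≤ max_i r_i(A^(k)) ≤ (min_j c_j(A^(k-1)))^{-1}. -/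

import Mathlib

open Finset Matrix

/-- Row sum of a matrix. -/
def rsum {m n : ℕ} (A : Matrix (Fin m) (Fin n) ℝ) (i : Fin m) : ℝ := ∑ j, A i j

/-- Column sum of a matrix. -/
def csum {m n : ℕ} (A : Matrix (Fin m) (Fin n) ℝ) (j : Fin n) : ℝ := ∑ i, A i j

theorem stmt1 (n : ℕ) (hn : 0 < n) (A : Matrix (Fin n) (Fin n) ℝ)
    (hA : ∀ i j, 0 ≤ A i j) (hA0 : A ≠ 0)
    (S : ℕ → Matrix (Fin n) (Fin n) ℝ)
    (hr0 : ∀ i, 0 < rsum A i)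
    (hrow : ∀ k i, 0 < rsum (S k) i) (hcol : ∀ k j, 0 < csum (S k) j)
    (h0 : ∀ i j, S 0 i j = A i j / rsum A i)
    (hodd : ∀ k, Odd k → ∀ i j, S k i j = S (k - 1) i j / csum (S (k - 1)) j)
    (heven : ∀ k, 0 < k → Even k → ∀ i j, S k i j = S (k - 1) i j / rsum (S (k - 1)) i) :
    (∀ k, Odd k →
      (⨅ i, rsum (S k) i) ≤ (⨅ i, rsum (S (k + 2)) i) ∧
      (⨅ i, rsum (S (k + 2)) i) ≤ 1 ∧
      1 ≤ (⨆ i, rsum (S (k + 2)) i) ∧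
      (⨆ i, rsum (S (k + 2)) i) ≤ (⨆ i, rsum (S k) i)) ∧
    (∀ k, Even k →
      (⨅ j, csum (S k) j) ≤ (⨅ j, csum (S (k + 2)) j) ∧
      (⨅ j, csum (S (k + 2)) j) ≤ 1 ∧
      1 ≤ (⨆ j, csum (S (k + 2)) j) ∧
      (⨆ j, csum (S (k + 2)) j) ≤ (⨆ j, csum (S k) j)) ∧
    (∀ k, Odd k →
      (⨆ j, csum (S (k - 1)) j)⁻¹ ≤ (⨅ i, rsum (S k) i) ∧
      (⨅ i, rsum (S k) i) ≤ 1 ∧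
      1 ≤ (⨆ i, rsum (S k) i) ∧
      (⨆ i, rsum (S k) i) ≤ (⨅ j, csum (S (k - 1)) j)⁻¹) := by
  haveI hne : Nonempty (Fin n) := ⟨⟨0, hn⟩⟩
  -- nonnegativity of all iterates
  have hS0 : ∀ k i j, 0 ≤ S k i j := by
    intro k
    induction k with
    | zero => intro i j; rw [h0]; exact div_nonneg (hA i j) (hr0 i).le
    | succ k ih =>
      intro i j
      rcases Nat.even_or_odd (k + 1) with he | ho
      · rw [heven (k + 1) (Nat.succ_pos k) he]
        simp only [Nat.add_sub_cancel]
        exact div_nonneg (ih i j) (hrow k i).le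
      · rw [hodd (k + 1) ho]
        simp only [Nat.add_sub_cancel]
        exact div_nonneg (ih i j) (hcol k j).le
  -- even iterates have unit row sums
  have hre : ∀ k, Even k → ∀ i, rsum (S k) i = 1 := by
    intro k hk i
    rcases Nat.eq_zero_or_pos k with rfl | hkpos
    · simp only [rsum, h0, ← Finset.sum_div]
      exact div_self (hr0 i).ne'
    · simp only [rsum, heven k hkpos hk, ← Finset.sum_div]
      exact div_self (hrow (k - 1) i).ne'
  -- odd iterates have unit column sums
  have hce : ∀ k, Odd k → ∀ j, csum (S k) j = 1 := by
    intro k hk j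
    simp only [csum, hodd k hk, ← Finset.sum_div]
    exact div_self (hcol (k - 1) j).ne'
  -- sum of row sums = n for odd iterates
  have hsum_r : ∀ k, Odd k → ∑ i, rsum (S k) i = n := by
    intro k hk
    simp only [rsum]
    rw [show (∑ i, ∑ j, S k i j) = ∑ j, ∑ i, S k i j from Finset.sum_comm]
    have : ∀ j : Fin n, ∑ i, S k i j = 1 := fun j => hce k hk j
    simp [this]
  -- sum of column sums = n for even iterates
  have hsum_c : ∀ k, Even k → ∑ j, csum (S k) j = n := by
    intro k hk
    simp only [csum]
    rw [Finset.sum_comm]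
    have : ∀ i : Fin n, ∑ j, S k i j = 1 := fun i => hre k hk i
    simp [this]
  -- averaging: if sum = n then inf ≤ 1 ≤ sup
  have havg : ∀ f : Fin n → ℝ, ∑ i, f i = n → (⨅ i, f i) ≤ 1 ∧ 1 ≤ ⨆ i, f i := by
    intro f hf
    constructor
    · obtain ⟨i0, -, hi0⟩ := Finset.exists_min_image Finset.univ f
        ⟨⟨0, hn⟩, Finset.mem_univ _⟩
      refine le_trans (ciInf_le (Set.finite_range f).bddBelow i0) ?_
      by_contra h
      push_neg at h
      have hlt : (n : ℝ) < ∑ i, f i := by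
        calc (n : ℝ) = ∑ _i : Fin n, (1 : ℝ) := by simp
          _ < ∑ i, f i := by
            refine Finset.sum_lt_sum_of_nonempty ⟨⟨0, hn⟩, Finset.mem_univ _⟩ ?_
            exact fun i _ => lt_of_lt_of_le h (hi0 i (Finset.mem_univ i))
      linarith
    · obtain ⟨i1, -, hi1⟩ := Finset.exists_max_image Finset.univ f
        ⟨⟨0, hn⟩, Finset.mem_univ _⟩
      refine le_trans ?_ (le_ciSup (Set.finite_range f).bddAbove i1)
      by_contra h
      push_neg at h
      have hlt : ∑ i, f i < (n : ℝ) := by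
        calc ∑ i, f i < ∑ _i : Fin n, (1 : ℝ) := by
              refine Finset.sum_lt_sum_of_nonempty ⟨⟨0, hn⟩, Finset.mem_univ _⟩ ?_
              exact fun i _ => lt_of_le_of_lt (hi1 i (Finset.mem_univ i)) h
          _ = (n : ℝ) := by simp
      linarith
  -- positivity of inf and sup of positive functions
  have hiInf_pos : ∀ f : Fin n → ℝ, (∀ i, 0 < f i) → 0 < ⨅ i, f i := by
    intro f hf
    obtain ⟨i0, -, hi0⟩ := Finset.exists_min_image Finset.univ f ⟨⟨0, hn⟩, Finset.mem_univ _⟩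
    exact lt_of_lt_of_le (hf i0) (le_ciInf fun i => hi0 i (Finset.mem_univ i))
  have hiSup_pos : ∀ f : Fin n → ℝ, (∀ i, 0 < f i) → 0 < ⨆ i, f i := by
    intro f hf
    exact lt_of_lt_of_le (hf ⟨0, hn⟩) (le_ciSup (Set.finite_range f).bddAbove ⟨0, hn⟩)
  -- bounds for odd steps
  have hodd_bounds : ∀ k, Odd k → ∀ i,
      (⨆ j, csum (S (k - 1)) j)⁻¹ ≤ rsum (S k) i ∧
      rsum (S k) i ≤ (⨅ j, csum (S (k - 1)) j)⁻¹ := by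
    intro k hk i
    have hk1 : Even (k - 1) := Nat.Odd.sub_odd hk odd_one
    have hmpos : 0 < ⨅ j, csum (S (k - 1)) j := hiInf_pos _ (hcol (k - 1))
    have hMpos : 0 < ⨆ j, csum (S (k - 1)) j := hiSup_pos _ (hcol (k - 1))
    have hr : rsum (S k) i = ∑ j, S (k - 1) i j / csum (S (k - 1)) j := by
      simp only [rsum]
      exact Finset.sum_congr rfl fun j _ => hodd k hk i j
    have hrs : (∑ j, S (k - 1) i j) = 1 := hre (k - 1) hk1 i
    constructor
    · rw [hr]
      calc (⨆ j, csum (S (k - 1)) j)⁻¹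
          = ∑ j, S (k - 1) i j / (⨆ j, csum (S (k - 1)) j) := by
            rw [← Finset.sum_div, hrs, one_div]
        _ ≤ ∑ j, S (k - 1) i j / csum (S (k - 1)) j := by
            refine Finset.sum_le_sum fun j _ => ?_
            exact div_le_div_of_nonneg_left (hS0 (k - 1) i j) (hcol (k - 1) j)
              (le_ciSup (Set.finite_range _).bddAbove j)
    · rw [hr]
      calc ∑ j, S (k - 1) i j / csum (S (k - 1)) j
          ≤ ∑ j, S (k - 1) i j / (⨅ j, csum (S (k - 1)) j) := by
            refine Finset.sum_le_sum fun j _ => ?_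
            exact div_le_div_of_nonneg_left (hS0 (k - 1) i j) hmpos
              (ciInf_le (Set.finite_range _).bddBelow j)
        _ = (⨅ j, csum (S (k - 1)) j)⁻¹ := by
            rw [← Finset.sum_div, hrs, one_div]
  -- bounds for even steps
  have heven_bounds : ∀ k, 0 < k → Even k → ∀ j,
      (⨆ i, rsum (S (k - 1)) i)⁻¹ ≤ csum (S k) j ∧
      csum (S k) j ≤ (⨅ i, rsum (S (k - 1)) i)⁻¹ := by
    intro k hkpos hk j
    have hk1 : Odd (k - 1) := Nat.Even.sub_odd hkpos hk odd_one
    have hmpos : 0 < ⨅ i, rsum (S (k - 1)) i := hiInf_pos _ (hrow (k - 1))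
    have hc : csum (S k) j = ∑ i, S (k - 1) i j / rsum (S (k - 1)) i := by
      simp only [csum]
      exact Finset.sum_congr rfl fun i _ => heven k hkpos hk i j
    have hcs : (∑ i, S (k - 1) i j) = 1 := hce (k - 1) hk1 j
    constructor
    · rw [hc]
      calc (⨆ i, rsum (S (k - 1)) i)⁻¹
          = ∑ i, S (k - 1) i j / (⨆ i, rsum (S (k - 1)) i) := by
            rw [← Finset.sum_div, hcs, one_div]
        _ ≤ ∑ i, S (k - 1) i j / rsum (S (k - 1)) i := by
            refine Finset.sum_le_sum fun i _ => ?_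
            exact div_le_div_of_nonneg_left (hS0 (k - 1) i j) (hrow (k - 1) i)
              (le_ciSup (Set.finite_range _).bddAbove i)
    · rw [hc]
      calc ∑ i, S (k - 1) i j / rsum (S (k - 1)) i
          ≤ ∑ i, S (k - 1) i j / (⨅ i, rsum (S (k - 1)) i) := by
            refine Finset.sum_le_sum fun i _ => ?_
            exact div_le_div_of_nonneg_left (hS0 (k - 1) i j) hmpos
              (ciInf_le (Set.finite_range _).bddBelow i)
        _ = (⨅ i, rsum (S (k - 1)) i)⁻¹ := by
            rw [← Finset.sum_div, hcs, one_div]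
  refine ⟨?_, ?_, ?_⟩
  · -- part 1: odd k, compare row sums of S k and S (k+2)
    intro k hk
    have hk1e : Even (k + 1) := Odd.add_one hk
    have hk2o : Odd (k + 2) := by rcases hk with ⟨m, rfl⟩; exact ⟨m + 1, by ring⟩
    have hmr : 0 < ⨅ i, rsum (S k) i := hiInf_pos _ (hrow k)
    have hMr : 0 < ⨆ i, rsum (S k) i := hiSup_pos _ (hrow k)
    have hcsup_pos : 0 < ⨆ j, csum (S (k + 1)) j := hiSup_pos _ (hcol (k + 1))
    have hcinf_pos : 0 < ⨅ j, csum (S (k + 1)) j := hiInf_pos _ (hcol (k + 1))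
    have hcsup : (⨆ j, csum (S (k + 1)) j) ≤ (⨅ i, rsum (S k) i)⁻¹ :=
      ciSup_le fun j => (heven_bounds (k + 1) (Nat.succ_pos k) hk1e j).2
    have hcinf : (⨆ i, rsum (S k) i)⁻¹ ≤ ⨅ j, csum (S (k + 1)) j :=
      le_ciInf fun j => (heven_bounds (k + 1) (Nat.succ_pos k) hk1e j).1
    refine ⟨?_, (havg _ (hsum_r (k + 2) hk2o)).1, (havg _ (hsum_r (k + 2) hk2o)).2, ?_⟩
    · refine le_ciInf fun i => le_trans ?_ (hodd_bounds (k + 2) hk2o i).1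
      have h1 : ((⨅ i, rsum (S k) i)⁻¹)⁻¹ ≤ (⨆ j, csum (S (k + 1)) j)⁻¹ :=
        inv_anti₀ hcsup_pos hcsup
      rwa [inv_inv] at h1
    · refine ciSup_le fun i => le_trans (hodd_bounds (k + 2) hk2o i).2 ?_
      have h1 : (⨅ j, csum (S (k + 1)) j)⁻¹ ≤ ((⨆ i, rsum (S k) i)⁻¹)⁻¹ :=
        inv_anti₀ (inv_pos.mpr hMr) hcinf
      rwa [inv_inv] at h1
  · -- part 2: even k, compare column sums of S k and S (k+2)
    intro k hk
    have hk1o : Odd (k + 1) := Even.add_one hk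
    have hk2e : Even (k + 2) := by rcases hk with ⟨m, rfl⟩; exact ⟨m + 1, by ring⟩
    have hmc : 0 < ⨅ j, csum (S k) j := hiInf_pos _ (hcol k)
    have hMc : 0 < ⨆ j, csum (S k) j := hiSup_pos _ (hcol k)
    have hrsup_pos : 0 < ⨆ i, rsum (S (k + 1)) i := hiSup_pos _ (hrow (k + 1))
    have hrsup : (⨆ i, rsum (S (k + 1)) i) ≤ (⨅ j, csum (S k) j)⁻¹ :=
      ciSup_le fun i => (hodd_bounds (k + 1) hk1o i).2
    have hrinf : (⨆ j, csum (S k) j)⁻¹ ≤ ⨅ i, rsum (S (k + 1)) i :=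
      le_ciInf fun i => (hodd_bounds (k + 1) hk1o i).1
    refine ⟨?_, (havg _ (hsum_c (k + 2) hk2e)).1, (havg _ (hsum_c (k + 2) hk2e)).2, ?_⟩
    · refine le_ciInf fun j =>
        le_trans ?_ (heven_bounds (k + 2) (Nat.succ_pos _) hk2e j).1
      have h1 : ((⨅ j, csum (S k) j)⁻¹)⁻¹ ≤ (⨆ i, rsum (S (k + 1)) i)⁻¹ :=
        inv_anti₀ hrsup_pos hrsup
      rwa [inv_inv] at h1
    · refine ciSup_le fun j =>
        le_trans (heven_bounds (k + 2) (Nat.succ_pos _) hk2e j).2 ?_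
      have h1 : (⨅ i, rsum (S (k + 1)) i)⁻¹ ≤ ((⨆ j, csum (S k) j)⁻¹)⁻¹ :=
        inv_anti₀ (inv_pos.mpr hMc) hrinf
      rwa [inv_inv] at h1
  · -- part 3: bounds for odd iterates
    intro k hk
    exact ⟨le_ciInf fun i => (hodd_bounds k hk i).1,
      (havg _ (hsum_r k hk)).1, (havg _ (hsum_r k hk)).2,
      ciSup_le fun i => (hodd_bounds k hk i).2⟩
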